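/- arXiv:1506.03464 — 2 statements merged into one kernel-verified Lean document; each statement's English description precedes it below -/
import Mathlib

section
/- The permutation π = 591482637 ∈ S_9 is not an allowed pattern of the tent map, i.e. 591482637 ∉ A_9(Σ_{+−}). -/
/-- Infinite words over the alphabet `{0,…,k-1}`; `s i` is the letter `s_{i+1}`. -/
abbrev Word (k : ℕ) := ℕ → Fin k

/-- The number of indices `i < j` (0-indexed) with `σ_{s_i} = −` (`false` encodes `−`). -/
def negCount {k : ℕ} (σ : Fin k → Bool) (s : Word k) (j : ℕ) : ℕ :=
  ((Finset.range j).filter (fun i => σ (s i) = false)).card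

/-- The strict order `s ≺_σ t` on infinite words. -/
def sLt {k : ℕ} (σ : Fin k → Bool) (s t : Word k) : Prop :=
  ∃ j : ℕ, (∀ i < j, s i = t i) ∧ s j ≠ t j ∧
    ((Even (negCount σ s j) ∧ s j < t j) ∨ (¬ Even (negCount σ s j) ∧ t j < s j))

/-- `shiftW s i` is the word `s_{[i+1,∞)}`, i.e. the `i`-th iterate of the shift. -/
def shiftW {k : ℕ} (s : Word k) (i : ℕ) : Word k := fun m => s (m + i)

/-- `Pat(s, Σ_σ, n) = π`: the first `n` shifts of `s` are ordered according to `π`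
(0-indexed one-line notation). -/
def PatIs {k n : ℕ} (σ : Fin k → Bool) (s : Word k) (π : Equiv.Perm (Fin n)) : Prop :=
  ∀ i j : Fin n, π i < π j ↔ sLt σ (shiftW s i) (shiftW s j)

/-- The allowed patterns of length `n` of the signed shift `Σ_σ`. -/
def Allowed {k : ℕ} (σ : Fin k → Bool) (n : ℕ) : Set (Equiv.Perm (Fin n)) :=
  {π | ∃ s : Word k, PatIs σ s π}

/-- The starred cycle `ĥπ*` of `π`, as a partial map on 0-indexed positions:
position `π_i` carries value `π_{i+1}`, and position `π_n` carries `*` (i.e. `none`). -/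
def hatStar {n : ℕ} (π : Equiv.Perm (Fin n)) (p : Fin n) : Option (Fin n) :=
  if h : (π.symm p : ℕ) = n - 1 then none
  else some (π ⟨(π.symm p : ℕ) + 1, by have := (π.symm p).isLt; omega⟩)

/-- `e : ℕ → ℕ` (used on `{0,…,k}`) is a `*`-`σ`-segmentation of `ĥπ*`. -/
def IsStarSeg {k n : ℕ} (σ : Fin k → Bool) (π : Equiv.Perm (Fin n)) (e : ℕ → ℕ) : Prop :=
  e 0 = 0 ∧ e k = n ∧ Monotone e ∧
  -- (a) the non-`*` entries in the `t`-th block are increasing (σ_t = +) or decreasing (σ_t = −)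
  (∀ t : Fin k, ∀ p q : Fin n, e t ≤ (p : ℕ) → (q : ℕ) < e ((t : ℕ) + 1) → (p : ℕ) < (q : ℕ) →
    ∀ v w : Fin n, hatStar π p = some v → hatStar π q = some w →
      (if σ t = true then v < w else w < v)) ∧
  -- (b)
  (∀ (hk : 0 < k) (h0 : 0 < n) (h1 : 1 < n), σ ⟨0, hk⟩ = true →
     hatStar π ⟨0, h0⟩ = none → hatStar π ⟨1, h1⟩ = some ⟨0, h0⟩ → e 1 ≤ 1) ∧
  -- (c)
  (∀ (hk : k - 1 < k) (h0 : n - 2 < n) (h1 : n - 1 < n), σ ⟨k - 1, hk⟩ = true →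
     hatStar π ⟨n - 2, h0⟩ = some ⟨n - 1, h1⟩ → hatStar π ⟨n - 1, h1⟩ = none →
     n - 1 ≤ e (k - 1)) ∧
  -- (d)
  (∀ (hk0 : 0 < k) (hk1 : k - 1 < k) (h0 : 0 < n) (h1 : n - 2 < n) (h2 : n - 1 < n),
     σ ⟨0, hk0⟩ = false → σ ⟨k - 1, hk1⟩ = false →
     hatStar π ⟨0, h0⟩ = some ⟨n - 1, h2⟩ →
     hatStar π ⟨n - 2, h1⟩ = some ⟨0, h0⟩ → hatStar π ⟨n - 1, h2⟩ = none →
     e 1 = 0 ∨ n - 1 ≤ e (k - 1)) ∧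
  -- (e)
  (∀ (hk0 : 0 < k) (hk1 : k - 1 < k) (h0 : 0 < n) (h1 : 1 < n) (h2 : n - 1 < n),
     σ ⟨0, hk0⟩ = false → σ ⟨k - 1, hk1⟩ = false →
     hatStar π ⟨n - 1, h2⟩ = some ⟨0, h0⟩ →
     hatStar π ⟨0, h0⟩ = none → hatStar π ⟨1, h1⟩ = some ⟨n - 1, h2⟩ →
     e (k - 1) = n ∨ e 1 ≤ 1)

/-- `ĥπ* ∈ C^{σ,*}`: some `*`-`σ`-segmentation exists. -/
def InCstar {k n : ℕ} (σ : Fin k → Bool) (π : Equiv.Perm (Fin n)) : Prop :=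
  ∃ e : ℕ → ℕ, IsStarSeg σ π e

/-- The bad configuration forbidden by condition `(†)`: an integer `b ≥ 1` with `n − 2b ≥ 1`
such that `π_n` lies strictly between `π_{n−2b}` and `π_{n−b}`, and for all `1 ≤ i ≤ b` and
`0 ≤ t ≤ k−1`, `e_t < π_{n−b−i} ≤ e_{t+1}` iff `e_t < π_{n−i} ≤ e_{t+1}`.
(Values of `π` are 0-indexed, so `e_t < v ≤ e_{t+1}` becomes `e t ≤ v ∧ v < e (t+1)`.) -/
def DaggerBad (k : ℕ) {n : ℕ} (π : Equiv.Perm (Fin n)) (e : ℕ → ℕ) (b : ℕ) : Prop :=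
  ∃ (_ : 1 ≤ b) (hbn : 2 * b < n),
    (((π ⟨n - 1 - 2 * b, by omega⟩ : ℕ) < (π ⟨n - 1, by omega⟩ : ℕ) ∧
      (π ⟨n - 1, by omega⟩ : ℕ) < (π ⟨n - 1 - b, by omega⟩ : ℕ)) ∨
     ((π ⟨n - 1 - b, by omega⟩ : ℕ) < (π ⟨n - 1, by omega⟩ : ℕ) ∧
      (π ⟨n - 1, by omega⟩ : ℕ) < (π ⟨n - 1 - 2 * b, by omega⟩ : ℕ))) ∧
    (∀ i, 1 ≤ i → i ≤ b → ∀ t, t < k →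
      ((e t ≤ (π ⟨n - 1 - b - i, by omega⟩ : ℕ) ∧ (π ⟨n - 1 - b - i, by omega⟩ : ℕ) < e (t + 1)) ↔
       (e t ≤ (π ⟨n - 1 - i, by omega⟩ : ℕ) ∧ (π ⟨n - 1 - i, by omega⟩ : ℕ) < e (t + 1))))

/-- Condition `(†)`. -/
def Dagger {k n : ℕ} (σ : Fin k → Bool) (π : Equiv.Perm (Fin n)) : Prop :=
  ∃ e : ℕ → ℕ, IsStarSeg σ π e ∧ ∀ b : ℕ, ¬ DaggerBad k π e b

/-- The letter of the `π`-monotone word assigned to the (0-indexed) value `v`: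
the unique `t` with `e t ≤ v < e (t+1)` when `e` is a segmentation. -/
noncomputable def segLetter {k : ℕ} (hk : 0 < k) (e : ℕ → ℕ) (v : ℕ) : Fin k :=
  ⟨min (k - 1) (sInf {t : ℕ | v < e (t + 1)}),
   by have := Nat.min_le_left (k - 1) (sInf {t : ℕ | v < e (t + 1)}); omega⟩

/-- The `π`-monotone word `s_1 ⋯ s_n` associated to a segmentation `e`. -/
noncomputable def monoWord {k n : ℕ} (hk : 0 < k) (e : ℕ → ℕ) (π : Equiv.Perm (Fin n)) : List (Fin k) :=
  (List.finRange n).map (fun i => segLetter hk e (π i))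

/-- Prepend a finite word to an infinite word. -/
def appendW {k : ℕ} (l : List (Fin k)) (s : Word k) : Word k :=
  fun i => if h : i < l.length then l.get ⟨i, h⟩ else s (i - l.length)

/-- `n(q)`: number of negative letters of a finite word `q`. -/
def negCountL {k : ℕ} (σ : Fin k → Bool) (q : List (Fin k)) : ℕ :=
  (q.filter (fun c => σ c = false)).length

/-- The least word `w_σ` of `(W_k, ≺_σ)`. -/
def wMin {k : ℕ} (hk : 0 < k) (σ : Fin k → Bool) : Word k :=
  if σ ⟨0, hk⟩ = true then fun _ => ⟨0, hk⟩
  else if σ ⟨k - 1, by omega⟩ = true then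
    fun i => if i = 0 then ⟨0, hk⟩ else ⟨k - 1, by omega⟩
  else fun i => if i % 2 = 0 then ⟨0, hk⟩ else ⟨k - 1, by omega⟩

/-- The greatest word `W_σ` of `(W_k, ≺_σ)`. -/
def wMax {k : ℕ} (hk : 0 < k) (σ : Fin k → Bool) : Word k :=
  if σ ⟨k - 1, by omega⟩ = true then fun _ => ⟨k - 1, by omega⟩
  else if σ ⟨0, hk⟩ = true then
    fun i => if i = 0 then ⟨k - 1, by omega⟩ else ⟨0, hk⟩
  else fun i => if i % 2 = 0 then ⟨k - 1, by omega⟩ else ⟨0, hk⟩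

/-- A finite word is primitive if it is not a proper power of a shorter word. -/
def PrimitiveW {k : ℕ} (q : List (Fin k)) : Prop :=
  ¬ ∃ (r : List (Fin k)) (m : ℕ), r.length < q.length ∧ 1 < m ∧
      q = (List.replicate m r).flatten

/-- The word `s^{(1)}` (with `useMin = true`) resp. `s^{(2)}` (with `useMin = false`)
built from the `π`-monotone word of a segmentation `e` and a 0-indexed position `x0`:
`u p^{n−1}` followed by `w_σ`/`W_σ` according to the parities of `n` and `n(p)`. -/
noncomputable def buildWord {k n : ℕ} (hk : 0 < k) (σ : Fin k → Bool) (e : ℕ → ℕ)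
    (π : Equiv.Perm (Fin n)) (x0 : ℕ) (useMin : Bool) : Word k :=
  let w := monoWord hk e π
  let p := (w.take (n - 1)).drop x0
  let tail :=
    if n % 2 = 0 ∨ negCountL σ p % 2 = 0 then
      (if useMin then wMin hk σ else wMax hk σ)
    else
      (if useMin then wMax hk σ else wMin hk σ)
  appendW (w.take x0 ++ (List.replicate (n - 1) p).flatten) tail

/-- `ψ_k(t)`: the number of primitive words of length `t` over a `k`-letter alphabet. -/
noncomputable def psiW (k t : ℕ) : ℕ :=
  Set.ncard {q : List (Fin k) | q.length = t ∧ PrimitiveW q}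

/-- `a(n,k) = Σ_{t=1}^{n−1} ψ_k(t)·k^{n−t−1}`. -/
noncomputable def aNum (n k : ℕ) : ℕ :=
  ∑ t ∈ Finset.Icc 1 (n - 1), psiW k t * k ^ (n - t - 1)

/-- `I_{n,k} = a(n,k) + (k−2)k^{n−2}`, the number of allowed intervals of the `k`-shift. -/
noncomputable def INum (n k : ℕ) : ℕ := aNum n k + (k - 2) * k ^ (n - 2)

/-- The all-`+` signature, giving the `k`-shift. -/
def allPlus (k : ℕ) : Fin k → Bool := fun _ => true

/-- `b(n,2) = |A_n(Σ_2)|` and `b(n,i) = |A_n(Σ_i) \ A_n(Σ_{i−1})|` for `i ≥ 3`. -/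
noncomputable def bNum (n i : ℕ) : ℕ :=
  if i ≤ 2 then (Allowed (allPlus 2) n).ncard
  else ((Allowed (allPlus i) n) \ (Allowed (allPlus (i - 1)) n)).ncard

-- auxiliary lemmas
lemma negCount_congr {k : ℕ} (σ : Fin k → Bool) {u v : Word k} {j : ℕ}
    (h : ∀ i < j, u i = v i) : negCount σ u j = negCount σ v j := by
  unfold negCount
  congr 1
  apply Finset.filter_congr
  intro i hi
  rw [h i (Finset.mem_range.mp hi)]

lemma negCount_succ_top {k : ℕ} (σ : Fin k → Bool) (u : Word k) (j : ℕ) :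
    negCount σ u (j+1) = negCount σ u j + (if σ (u j) = false then 1 else 0) := by
  unfold negCount
  rw [Finset.range_add_one, Finset.filter_insert]
  split_ifs with h
  · rw [Finset.card_insert_of_notMem (by simp)]
  · simp

lemma negCount_cons {k : ℕ} (σ : Fin k → Bool) (u : Word k) :
    ∀ j, negCount σ u (j+1) = (if σ (u 0) = false then 1 else 0) + negCount σ (shiftW u 1) j := by
  intro j; induction j with
  | zero =>
    rw [negCount_succ_top]
    simp [negCount]
  | succ j ih =>
    rw [negCount_succ_top σ u (j+1), ih, negCount_succ_top σ (shiftW u 1) j]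
    have h : shiftW u 1 j = u (j+1) := rfl
    rw [h]; omega

lemma first_le {k : ℕ} (σ : Fin k → Bool) {u v : Word k} (h : sLt σ u v) : u 0 ≤ v 0 := by
  obtain ⟨j, hpre, hne, hc⟩ := h
  rcases Nat.eq_zero_or_pos j with rfl | hj
  · rcases hc with ⟨_, h⟩ | ⟨hne', _⟩
    · exact le_of_lt h
    · exfalso; apply hne'; simp [negCount]
  · exact le_of_eq (hpre 0 hj)

lemma shiftW_shiftW {k : ℕ} (s : Word k) (i : ℕ) :
    shiftW (shiftW s i) 1 = shiftW s (i+1) :=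
  funext fun m => congrArg s (by omega)

lemma sLt_tail_pos {k : ℕ} (σ : Fin k → Bool) {u v : Word k} (h0 : u 0 = v 0)
    (hσ : σ (u 0) = true) (h : sLt σ u v) : sLt σ (shiftW u 1) (shiftW v 1) := by
  obtain ⟨j, hpre, hne, hc⟩ := h
  obtain ⟨j, rfl⟩ : ∃ j', j = j' + 1 := by
    cases j with
    | zero => exact absurd h0 hne
    | succ j => exact ⟨j, rfl⟩
  have hcnt : negCount σ u (j+1) = negCount σ (shiftW u 1) j := by
    rw [negCount_cons, hσ]; simp
  refine ⟨j, fun i hi => hpre (i+1) (by omega), hne, ?_⟩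
  rw [← hcnt]
  exact hc

lemma sLt_tail_neg {k : ℕ} (σ : Fin k → Bool) {u v : Word k} (h0 : u 0 = v 0)
    (hσ : σ (u 0) = false) (h : sLt σ u v) : sLt σ (shiftW v 1) (shiftW u 1) := by
  obtain ⟨j, hpre, hne, hc⟩ := h
  obtain ⟨j, rfl⟩ : ∃ j', j = j' + 1 := by
    cases j with
    | zero => exact absurd h0 hne
    | succ j => exact ⟨j, rfl⟩
  have hcnt : negCount σ u (j+1) = negCount σ (shiftW u 1) j + 1 := by
    rw [negCount_cons, hσ]; simp; omega
  have hcgr : negCount σ (shiftW v 1) j = negCount σ (shiftW u 1) j :=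
    negCount_congr σ (fun i hi => (hpre (i+1) (by omega)).symm)
  refine ⟨j, fun i hi => (hpre (i+1) (by omega)).symm, (Ne.symm hne), ?_⟩
  rw [hcgr]
  rcases hc with ⟨he, hlt⟩ | ⟨he, hlt⟩
  · right
    refine ⟨?_, hlt⟩
    rw [hcnt, Nat.even_add_one] at he
    exact he
  · left
    refine ⟨?_, hlt⟩
    rw [hcnt, Nat.even_add_one, not_not] at he
    exact he

theorem not_allowed_591482637 :
    Equiv.ofBijective (![4, 8, 0, 3, 7, 1, 5, 2, 6] : Fin 9 → Fin 9) (by decide)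
      ∉ Allowed (![true, false] : Fin 2 → Bool) 9 := by
  intro hmem
  obtain ⟨s, hs⟩ := hmem
  set σ2 : Fin 2 → Bool := ![true, false] with hσ2
  set X : ℕ → Word 2 := shiftW s with hX
  have fin2 : ∀ a : Fin 2, a = 0 ∨ a = 1 := by decide
  have hX0 : ∀ n, X n 0 = s n := fun n => congrArg s (Nat.zero_add n)
  -- concrete sLt facts from the pattern
  have h57 : sLt σ2 (X 5) (X 7) := (hs 5 7).mp (by decide)
  have h73 : sLt σ2 (X 7) (X 3) := (hs 7 3).mp (by decide)
  have h30 : sLt σ2 (X 3) (X 0) := (hs 3 0).mp (by decide)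
  have h06 : sLt σ2 (X 0) (X 6) := (hs 0 6).mp (by decide)
  have h68 : sLt σ2 (X 6) (X 8) := (hs 6 8).mp (by decide)
  have h84 : sLt σ2 (X 8) (X 4) := (hs 8 4).mp (by decide)
  have n86 : ¬ sLt σ2 (X 8) (X 6) := fun h => absurd ((hs 8 6).mpr h) (by decide)
  have n48 : ¬ sLt σ2 (X 4) (X 8) := fun h => absurd ((hs 4 8).mpr h) (by decide)
  have n17 : ¬ sLt σ2 (X 1) (X 7) := fun h => absurd ((hs 1 7).mpr h) (by decide)
  -- letter inequalities along the order
  have v57 : s 5 ≤ s 7 := by have := first_le σ2 h57; rwa [hX0, hX0] at this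
  have v73 : s 7 ≤ s 3 := by have := first_le σ2 h73; rwa [hX0, hX0] at this
  have v30 : s 3 ≤ s 0 := by have := first_le σ2 h30; rwa [hX0, hX0] at this
  have v06 : s 0 ≤ s 6 := by have := first_le σ2 h06; rwa [hX0, hX0] at this
  have v68 : s 6 ≤ s 8 := by have := first_le σ2 h68; rwa [hX0, hX0] at this
  have v84 : s 8 ≤ s 4 := by have := first_le σ2 h84; rwa [hX0, hX0] at this
  -- pair constraints
  have C57 : s 5 = 1 → s 7 = 1 → False := by
    intro a5 a7
    have h0 : X 5 0 = X 7 0 := by rw [hX0, hX0, a5, a7]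
    have hv : σ2 (X 5 0) = false := by rw [hX0, a5]; rfl
    have := sLt_tail_neg σ2 h0 hv h57
    rw [shiftW_shiftW, shiftW_shiftW] at this
    exact n86 this
  have C37 : s 7 = 1 → s 3 = 1 → False := by
    intro a7 a3
    have h0 : X 7 0 = X 3 0 := by rw [hX0, hX0, a7, a3]
    have hv : σ2 (X 7 0) = false := by rw [hX0, a7]; rfl
    have := sLt_tail_neg σ2 h0 hv h73
    rw [shiftW_shiftW, shiftW_shiftW] at this
    exact n48 this
  have C06 : s 0 = 0 → s 6 = 0 → False := by
    intro a0 a6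
    have h0 : X 0 0 = X 6 0 := by rw [hX0, hX0, a0, a6]
    have hv : σ2 (X 0 0) = true := by rw [hX0, a0]; rfl
    have := sLt_tail_pos σ2 h0 hv h06
    rw [shiftW_shiftW, shiftW_shiftW] at this
    exact n17 this
  -- forced letters
  have a7 : s 7 = 0 := by
    rcases fin2 (s 7) with h | h
    · exact h
    · exfalso
      rcases fin2 (s 3) with h3 | h3
      · rw [h, h3] at v73; exact absurd v73 (by decide)
      · exact C37 h h3
  have a5 : s 5 = 0 := by
    rcases fin2 (s 5) with h | h
    · exact h
    · rw [h, a7] at v57; exact absurd v57 (by decide)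
  have a6 : s 6 = 1 := by
    rcases fin2 (s 6) with h | h
    · exfalso
      rcases fin2 (s 0) with h0 | h0
      · exact C06 h0 h
      · rw [h0, h] at v06; exact absurd v06 (by decide)
    · exact h
  have a8 : s 8 = 1 := by
    rcases fin2 (s 8) with h | h
    · rw [a6, h] at v68; exact absurd v68 (by decide)
    · exact h
  have a4 : s 4 = 1 := by
    rcases fin2 (s 4) with h | h
    · rw [a8, h] at v84; exact absurd v84 (by decide)
    · exact h
  -- base betweenness: X5 ≺ X9 ≺ X7
  have b1 : sLt σ2 (X 5) (X 9) := by
    have h0 : X 8 0 = X 4 0 := by rw [hX0, hX0, a8, a4]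
    have hv : σ2 (X 8 0) = false := by rw [hX0, a8]; rfl
    have := sLt_tail_neg σ2 h0 hv h84
    rwa [shiftW_shiftW, shiftW_shiftW] at this
  have b2 : sLt σ2 (X 9) (X 7) := by
    have h0 : X 6 0 = X 8 0 := by rw [hX0, hX0, a6, a8]
    have hv : σ2 (X 6 0) = false := by rw [hX0, a6]; rfl
    have := sLt_tail_neg σ2 h0 hv h68
    rwa [shiftW_shiftW, shiftW_shiftW] at this
  -- main induction
  have main : ∀ m, s (m+5) = s (m+7) ∧ s (m+6) = s (m+8) ∧
      ((sLt σ2 (X (m+5)) (X (m+9)) ∧ sLt σ2 (X (m+9)) (X (m+7))) ∨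
       (sLt σ2 (X (m+7)) (X (m+9)) ∧ sLt σ2 (X (m+9)) (X (m+5)))) := by
    intro m
    induction m with
    | zero => exact ⟨by rw [a5, a7], by rw [a6, a8], Or.inl ⟨b1, b2⟩⟩
    | succ m ih =>
      obtain ⟨e0, e1, hb⟩ := ih
      have l9 : s (m+9) = s (m+5) := by
        rcases hb with ⟨p, q⟩ | ⟨p, q⟩
        · have u := first_le σ2 p
          have w := first_le σ2 q
          rw [hX0, hX0] at u w
          rw [← e0] at w
          exact le_antisymm w u
        · have u := first_le σ2 p
          have w := first_le σ2 q
          rw [hX0, hX0] at u w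
          rw [← e0] at u
          exact le_antisymm w u
      refine ⟨e1, (l9.trans e0).symm, ?_⟩
      have h0a : X (m+5) 0 = X (m+9) 0 := by rw [hX0, hX0, l9]
      have h0b : X (m+9) 0 = X (m+7) 0 := by rw [hX0, hX0, l9, e0]
      rcases fin2 (s (m+5)) with hv | hv
      · -- letter 0, order preserved
        have hσa : σ2 (X (m+5) 0) = true := by rw [hX0, hv]; rfl
        have hσb : σ2 (X (m+9) 0) = true := by rw [hX0, l9, hv]; rfl
        have hσc : σ2 (X (m+7) 0) = true := by rw [hX0, ← e0, hv]; rfl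
        rcases hb with ⟨p, q⟩ | ⟨p, q⟩
        · left
          constructor
          · have := sLt_tail_pos σ2 h0a hσa p
            rwa [shiftW_shiftW, shiftW_shiftW] at this
          · have := sLt_tail_pos σ2 h0b hσb q
            rwa [shiftW_shiftW, shiftW_shiftW] at this
        · right
          constructor
          · have := sLt_tail_pos σ2 h0b.symm hσc p
            rwa [shiftW_shiftW, shiftW_shiftW] at this
          · have := sLt_tail_pos σ2 h0a.symm hσb q
            rwa [shiftW_shiftW, shiftW_shiftW] at this
      · -- letter 1, order flipped
        have hσa : σ2 (X (m+5) 0) = false := by rw [hX0, hv]; rfl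
        have hσb : σ2 (X (m+9) 0) = false := by rw [hX0, l9, hv]; rfl
        have hσc : σ2 (X (m+7) 0) = false := by rw [hX0, ← e0, hv]; rfl
        rcases hb with ⟨p, q⟩ | ⟨p, q⟩
        · right
          constructor
          · have := sLt_tail_neg σ2 h0b hσb q
            rwa [shiftW_shiftW, shiftW_shiftW] at this
          · have := sLt_tail_neg σ2 h0a hσa p
            rwa [shiftW_shiftW, shiftW_shiftW] at this
        · left
          constructor
          · have := sLt_tail_neg σ2 h0a.symm hσb q
            rwa [shiftW_shiftW, shiftW_shiftW] at this
          · have := sLt_tail_neg σ2 h0b.symm hσc p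
            rwa [shiftW_shiftW, shiftW_shiftW] at this
  -- conclusion: X 5 = X 7, contradicting h57
  obtain ⟨j, _, hne, _⟩ := h57
  exact hne (main j).1
end

section
/- The permutation π = 3425617 ∈ S_7 is not an allowed pattern of the reverse binary shift, i.e. 3425617 ∉ A_7(Σ_{−−}). -/
namespace RevShiftAux

abbrev σ2 : Fin 2 → Bool := ![false, false]

lemma fin2 (a : Fin 2) : a = 0 ∨ a = 1 := by fin_cases a <;> simp

lemma negCount2 (u : Word 2) (j : ℕ) : negCount σ2 u j = j := by
  have h : ∀ c : Fin 2, σ2 c = false := by decide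
  simp [negCount, h]

lemma lt_letter {u v : Word 2} (h : u 0 < v 0) : sLt σ2 u v := by
  refine ⟨0, fun i hi => absurd hi (by omega), Fin.ne_of_lt h, Or.inl ⟨?_, h⟩⟩
  rw [negCount2]; exact Even.zero

lemma asymm {u v : Word 2} (h1 : sLt σ2 u v) (h2 : sLt σ2 v u) : False := by
  obtain ⟨j1, hp1, hn1, hc1⟩ := h1
  obtain ⟨j2, hp2, hn2, hc2⟩ := h2
  have hj : j1 = j2 := by
    by_contra hne
    rcases Nat.lt_or_ge j1 j2 with h | h
    · exact hn1 (hp2 j1 h).symm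
    · rcases Nat.lt_or_ge j2 j1 with h' | h'
      · exact hn2 (hp1 j2 h').symm
      · omega
  subst hj
  rw [negCount2] at hc1 hc2
  rcases hc1 with ⟨he1, h1⟩ | ⟨he1, h1⟩ <;> rcases hc2 with ⟨he2, h2⟩ | ⟨he2, h2⟩
  · exact absurd h2 (lt_asymm h1)
  · exact he2 he1
  · exact he1 he2
  · exact absurd h2 (lt_asymm h1)

lemma rev {u v : Word 2} (h0 : u 0 = v 0) (h : sLt σ2 u v) :
    sLt σ2 (fun m => v (m + 1)) (fun m => u (m + 1)) := by
  obtain ⟨j, hp, hn, hc⟩ := h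
  match j with
  | 0 => exact absurd h0 hn
  | (e+1) =>
    refine ⟨e, ?_, ?_, ?_⟩
    · intro m hm
      exact (hp (m + 1) (by omega)).symm
    · exact fun hvu => hn hvu.symm
    · rw [negCount2] at hc ⊢
      rcases hc with ⟨he, hlt⟩ | ⟨he, hlt⟩
      · exact Or.inr ⟨Nat.even_add_one.mp he, hlt⟩
      · exact Or.inl ⟨by rw [Nat.even_add_one] at he; exact not_not.mp he, hlt⟩

lemma shiftW_succ (s : Word 2) (i : ℕ) :
    (fun m => shiftW s i (m + 1)) = shiftW s (i + 1) :=
  funext fun m => congrArg s (by omega)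

lemma revS (s : Word 2) {i j : ℕ} (h0 : s i = s j)
    (h : sLt σ2 (shiftW s i) (shiftW s j)) :
    sLt σ2 (shiftW s (j + 1)) (shiftW s (i + 1)) := by
  have h0' : shiftW s i 0 = shiftW s j 0 := by simpa [shiftW] using h0
  have := rev h0' h
  rwa [shiftW_succ, shiftW_succ] at this

lemma ltS (s : Word 2) {i j : ℕ} (h : s i < s j) :
    sLt σ2 (shiftW s i) (shiftW s j) :=
  lt_letter (by simpa [shiftW] using h)

lemma forced01 {s : Word 2} {i j : ℕ}
    (hij : sLt σ2 (shiftW s i) (shiftW s j))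
    (hrev : sLt σ2 (shiftW s (i + 1)) (shiftW s (j + 1))) :
    s i = 0 ∧ s j = 1 := by
  have hne : s i ≠ s j := fun h => asymm (revS s h hij) hrev
  rcases fin2 (s i) with h0 | h0 <;> rcases fin2 (s j) with h1 | h1
  · exact absurd (h0.trans h1.symm) hne
  · exact ⟨h0, h1⟩
  · exact absurd hij (fun h => asymm h (ltS s (by rw [h0, h1]; decide)))
  · exact absurd (h0.trans h1.symm) hne

lemma forced1 {s : Word 2} {i j : ℕ}
    (h : sLt σ2 (shiftW s i) (shiftW s j)) (hi : s i = 1) : s j = 1 := by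
  rcases fin2 (s j) with h0 | h0
  · exact absurd (ltS s (show s j < s i by rw [hi, h0]; decide))
      (fun hL => asymm h hL)
  · exact h0

lemma forced0 {s : Word 2} {i j : ℕ}
    (h : sLt σ2 (shiftW s i) (shiftW s j)) (hj : s j = 0) : s i = 0 := by
  rcases fin2 (s i) with h0 | h0
  · exact h0
  · exact absurd (ltS s (show s j < s i by rw [hj, h0]; decide))
      (fun hL => asymm h hL)

end RevShiftAux

open RevShiftAux in
theorem not_allowed_3425617 :
    Equiv.ofBijective (![2, 3, 1, 4, 5, 0, 6] : Fin 7 → Fin 7) (by decide)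
      ∉ Allowed (![false, false] : Fin 2 → Bool) 7 := by
  rintro ⟨s, hs⟩
  -- basic order relations among the first seven shifts, read off from `π`
  have h03 : sLt σ2 (shiftW s 0) (shiftW s 3) := (hs 0 3).mp (by decide)
  have h14 : sLt σ2 (shiftW s 1) (shiftW s 4) := (hs 1 4).mp (by decide)
  have h13 : sLt σ2 (shiftW s 1) (shiftW s 3) := (hs 1 3).mp (by decide)
  have h24 : sLt σ2 (shiftW s 2) (shiftW s 4) := (hs 2 4).mp (by decide)
  have h23 : sLt σ2 (shiftW s 2) (shiftW s 3) := (hs 2 3).mp (by decide)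
  have h34 : sLt σ2 (shiftW s 3) (shiftW s 4) := (hs 3 4).mp (by decide)
  have h50 : sLt σ2 (shiftW s 5) (shiftW s 0) := (hs 5 0).mp (by decide)
  have h46 : sLt σ2 (shiftW s 4) (shiftW s 6) := (hs 4 6).mp (by decide)
  have h36 : sLt σ2 (shiftW s 3) (shiftW s 6) := (hs 3 6).mp (by decide)
  -- forced letters
  obtain ⟨hs0, hs3⟩ := forced01 h03 h14
  obtain ⟨hs2, _⟩ := forced01 h23 h34
  have hs4 : s 4 = 1 := forced1 h34 hs3
  have hs5 : s 5 = 0 := forced0 h50 hs0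
  have hs6 : s 6 = 1 := forced1 h46 hs4
  have h74 : sLt σ2 (shiftW s 7) (shiftW s 4) := revS s (hs3.trans hs6.symm) h36
  have h75 : sLt σ2 (shiftW s 7) (shiftW s 5) := revS s (hs4.trans hs6.symm) h46
  have hs7 : s 7 = 0 := forced0 h75 hs5
  have h68 : sLt σ2 (shiftW s 6) (shiftW s 8) := revS s (hs7.trans hs5.symm) h75
  have hs8 : s 8 = 1 := forced1 h68 hs6
  have h97 : sLt σ2 (shiftW s 9) (shiftW s 7) := revS s (hs6.trans hs8.symm) h68
  -- induction: from index 7 on, the letters are forced to alternate 0,1,0,1,…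
  have key : ∀ m : ℕ, s (7 + 2 * m) = 0 ∧ s (8 + 2 * m) = 1 ∧
      sLt σ2 (shiftW s (9 + 2 * m)) (shiftW s (7 + 2 * m)) := by
    intro m
    induction m with
    | zero => exact ⟨hs7, hs8, h97⟩
    | succ m ih =>
      obtain ⟨h7, h8, h97'⟩ := ih
      have h9 : s (9 + 2 * m) = 0 := forced0 h97' h7
      have h810 : sLt σ2 (shiftW s (7 + 2 * m + 1)) (shiftW s (9 + 2 * m + 1)) :=
        revS s (h9.trans h7.symm) h97'
      rw [show 7 + 2 * m + 1 = 8 + 2 * m from by ring,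
          show 9 + 2 * m + 1 = 10 + 2 * m from by ring] at h810
      have h10 : s (10 + 2 * m) = 1 := forced1 h810 h8
      have h119 : sLt σ2 (shiftW s (10 + 2 * m + 1)) (shiftW s (8 + 2 * m + 1)) :=
        revS s (h8.trans h10.symm) h810
      rw [show 10 + 2 * m + 1 = 11 + 2 * m from by ring,
          show 8 + 2 * m + 1 = 9 + 2 * m from by ring] at h119
      refine ⟨?_, ?_, ?_⟩
      · rw [show 7 + 2 * (m + 1) = 9 + 2 * m from by ring]; exact h9
      · rw [show 8 + 2 * (m + 1) = 10 + 2 * m from by ring]; exact h10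
      · rw [show 9 + 2 * (m + 1) = 11 + 2 * m from by ring,
            show 7 + 2 * (m + 1) = 9 + 2 * m from by ring]
        exact h119
  -- but then `shiftW s 9 = shiftW s 7`, contradicting strictness
  obtain ⟨j, -, hne, -⟩ := h97
  apply hne
  show s (j + 9) = s (j + 7)
  rcases Nat.even_or_odd j with ⟨a, ha⟩ | ⟨a, ha⟩
  · have e1 := (key (a + 1)).1
    have e2 := (key a).1
    rw [show j + 9 = 7 + 2 * (a + 1) from by omega, show j + 7 = 7 + 2 * a from by omega,
        e1, e2]
  · have e1 := (key (a + 1)).2.1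
    have e2 := (key a).2.1
    rw [show j + 9 = 8 + 2 * (a + 1) from by omega, show j + 7 = 8 + 2 * a from by omega,
        e1, e2]
end
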